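/- Let R be an n×n real matrix with zero diagonal. A = max_{λ ∈ Δ} min_σ Σ_i λ_i · R i (σ i) = 0 if and only if there exist scalars v_i and nonnegative weights λ_i, not all zero, such that v_j − v_i ≤ λ_i · R i j for all i, j. -/

import Mathlib

namespace Stmt14
variable {n : ℕ}

def cost (c : Fin n → Fin n → ℝ) : List (Fin n) → ℝ
  | [] => 0
  | [_] => 0
  | a :: b :: t => c a b + cost c (b :: t)

@[simp] lemma cost_nil (c : Fin n → Fin n → ℝ) : cost c [] = 0 := rfl
@[simp] lemma cost_single (c : Fin n → Fin n → ℝ) (a : Fin n) : cost c [a] = 0 := rfl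
@[simp] lemma cost_cons_cons (c : Fin n → Fin n → ℝ) (a b : Fin n) (t : List (Fin n)) :
    cost c (a :: b :: t) = c a b + cost c (b :: t) := rfl

lemma cost_append (c : Fin n → Fin n → ℝ) :
    ∀ (l1 : List (Fin n)) (x : Fin n) (l2 : List (Fin n)),
      cost c (l1 ++ x :: l2) = cost c (l1 ++ [x]) + cost c (x :: l2)
  | [], x, l2 => by simp
  | [a], x, l2 => by simp
  | a :: b :: t, x, l2 => by
      have ih := cost_append c (b :: t) x l2
      simp only [List.cons_append, cost_cons_cons] at ih ⊢
      rw [ih]; ring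

lemma cost_eq_sum (c : Fin n → Fin n → ℝ) (d0 : Fin n) :
    ∀ l : List (Fin n),
      cost c l = ∑ k ∈ Finset.range (l.length - 1), c (l.getD k d0) (l.getD (k + 1) d0)
  | [] => by simp
  | [a] => by simp
  | a :: b :: t => by
      have ih := cost_eq_sum c d0 (b :: t)
      simp only [cost_cons_cons, List.length_cons]
      rw [ih]
      have : (t.length + 1 + 1 - 1) = (t.length + 1 - 1) + 1 := by simp
      rw [this, Finset.sum_range_succ']
      simp only [List.getD_cons_succ, List.getD_cons_zero, List.length_cons]
      ring

lemma nodup_cycle_cost (c : Fin n → Fin n → ℝ) (hd : ∀ i, c i i = 0)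
    (hperm : ∀ σ : Equiv.Perm (Fin n), 0 ≤ ∑ i, c i (σ i))
    (x : Fin n) (l : List (Fin n)) (hnd : (x :: l).Nodup) :
    0 ≤ cost c ((x :: l) ++ [x]) := by
  set l' : List (Fin n) := x :: l with hl'
  set σ := l'.formPerm with hσ
  have h1 : (0:ℝ) ≤ ∑ i, c i (σ i) := hperm σ
  have h2 : ∑ i, c i (σ i) = ∑ i ∈ l'.toFinset, c i (σ i) := by
    refine (Finset.sum_subset (Finset.subset_univ _) ?_).symm
    intro i _ hi
    rw [hσ, List.formPerm_apply_of_notMem (by simpa using hi), hd]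
  have h3 : ∑ k ∈ Finset.range l'.length, c (l'.getD k x) (σ (l'.getD k x))
      = ∑ i ∈ l'.toFinset, c i (σ i) := by
    refine Finset.sum_bij (fun k hk => l'.getD k x) ?_ ?_ ?_ ?_
    · intro k hk
      have hk' : k < l'.length := Finset.mem_range.mp hk
      show l'.getD k x ∈ l'.toFinset
      rw [List.getD_eq_getElem _ _ hk']
      exact List.mem_toFinset.mpr (List.getElem_mem hk')
    · intro k1 hk1 k2 hk2 he
      have hk1' : k1 < l'.length := Finset.mem_range.mp hk1
      have hk2' : k2 < l'.length := Finset.mem_range.mp hk2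
      have he' : l'.getD k1 x = l'.getD k2 x := he
      rw [List.getD_eq_getElem _ _ hk1', List.getD_eq_getElem _ _ hk2'] at he'
      exact (List.Nodup.getElem_inj_iff hnd).mp he'
    · intro i hi
      obtain ⟨k, hk, hke⟩ := List.mem_iff_getElem.mp (List.mem_toFinset.mp hi)
      refine ⟨k, Finset.mem_range.mpr hk, ?_⟩
      show l'.getD k x = i
      rw [List.getD_eq_getElem _ _ hk, hke]
    · intro k hk; rfl
  have h4 : cost c (l' ++ [x]) =
      ∑ k ∈ Finset.range l'.length, c (l'.getD k x) (σ (l'.getD k x)) := by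
    rw [cost_eq_sum c x]
    have hlen : (l' ++ [x]).length - 1 = l'.length := by simp
    rw [hlen]
    refine Finset.sum_congr rfl fun k hk => ?_
    have hk' : k < l'.length := Finset.mem_range.mp hk
    have e1 : (l' ++ [x]).getD k x = l'.getD k x := List.getD_append _ _ _ _ hk'
    have e3 : σ (l'.getD k x) = l'[(k+1) % l'.length]'(Nat.mod_lt _ (Nat.zero_lt_of_lt hk')) := by
      rw [List.getD_eq_getElem _ _ hk', hσ]
      exact List.formPerm_apply_getElem l' hnd k hk'
    rw [e1, e3]
    by_cases hk2 : k + 1 < l'.length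
    · rw [List.getD_append _ _ _ _ hk2, List.getD_eq_getElem _ _ hk2]
      have hm : (k+1) % l'.length = k + 1 := Nat.mod_eq_of_lt hk2
      congr 1
      simp only [hm]
    · have hke : k + 1 = l'.length := by omega
      have e4 : (l' ++ [x]).getD (k+1) x = x := by
        rw [List.getD_append_right _ _ _ _ (le_of_eq hke.symm)]
        simp [hke]
      rw [e4]
      congr 1
      have hke' : k + 1 = l.length + 1 := by rw [hl'] at hke; simpa using hke
      have h0 : (k+1) % (l.length + 1) = 0 := by rw [hke']; exact Nat.mod_self _
      show x = (x :: l)[(k+1) % (x :: l).length]'_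
      simp [h0]
  linarith [h1, h2.symm ▸ h1, h4, h3]


lemma dup_decomp {α : Type*} : ∀ {l : List α} {x : α}, List.Duplicate x l →
    ∃ l1 l2 l3, l = l1 ++ x :: (l2 ++ x :: l3) := by
  intro l x h
  induction h with
  | cons_mem hm =>
      obtain ⟨s, t, rfl⟩ := List.append_of_mem hm
      exact ⟨[], s, t, rfl⟩
  | @cons_duplicate y l' h ih =>
      obtain ⟨l1, l2, l3, rfl⟩ := ih
      exact ⟨y :: l1, l2, l3, rfl⟩

lemma cycle_nonneg (c : Fin n → Fin n → ℝ) (hd : ∀ i, c i i = 0)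
    (hperm : ∀ σ : Equiv.Perm (Fin n), 0 ≤ ∑ i, c i (σ i)) :
    ∀ (N : ℕ) (l : List (Fin n)) (x : Fin n), l.length ≤ N → 0 ≤ cost c ((x :: l) ++ [x]) := by
  intro N
  induction N with
  | zero =>
      intro l x hl
      obtain rfl : l = [] := List.length_eq_zero_iff.mp (Nat.le_zero.mp hl)
      simp [hd]
  | succ N ih =>
      intro l x hl
      by_cases hnd : (x :: l).Nodup
      · exact nodup_cycle_cost c hd hperm x l hnd
      · obtain ⟨y, hy⟩ := List.exists_duplicate_iff_not_nodup.mpr hnd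
        obtain ⟨l1, l2, l3, hdec⟩ := dup_decomp hy
        have hlen : l.length = l1.length + (l2.length + (l3.length + 1) + 1) - 1 := by
          have := congrArg List.length hdec
          simp [List.length_append, List.length_cons] at this
          omega
        have key : cost c ((x :: l) ++ [x]) =
            cost c (l1 ++ y :: (l3 ++ [x])) + cost c ((y :: l2) ++ [y]) := by
          rw [hdec]
          have e1 : (l1 ++ y :: (l2 ++ y :: l3)) ++ [x] = l1 ++ y :: (l2 ++ y :: (l3 ++ [x])) := by
            simp
          rw [e1, cost_append c l1 y, cost_append c l1 y (l3 ++ [x])]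
          have e2 : y :: (l2 ++ y :: (l3 ++ [x])) = (y :: l2) ++ y :: (l3 ++ [x]) := by simp
          rw [e2, cost_append c (y :: l2) y (l3 ++ [x])]
          have e3 : (y :: l2) ++ [y] = y :: l2 ++ [y] := by simp
          rw [e3]; ring
        have h2 : 0 ≤ cost c ((y :: l2) ++ [y]) := ih l2 y (by omega)
        have h1 : 0 ≤ cost c (l1 ++ y :: (l3 ++ [x])) := by
          cases l1 with
          | nil =>
              have hx : x = y := by
                have := hdec
                simp only [List.nil_append] at this
                exact (List.cons.injEq _ _ _ _).mp this |>.1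
              subst hx
              have := ih l3 x (by omega)
              simpa using this
          | cons a l1' =>
              have hax : a = x := by
                have := hdec
                simp only [List.cons_append] at this
                exact ((List.cons.injEq _ _ _ _).mp this).1.symm
              subst hax
              have e : (a :: l1') ++ y :: (l3 ++ [a]) = (a :: (l1' ++ y :: l3)) ++ [a] := by simp
              rw [e]
              exact ih (l1' ++ y :: l3) a (by simp only [List.length_cons] at hlen; simp [List.length_append]; omega)
        linarith

lemma concat_last_eq {α : Type*} {A u : List α} {a j : α} (h : A ++ [a] = u ++ [j]) : a = j := by
  have := congrArg List.getLast? h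
  simpa [List.getLast?_concat] using this

lemma exists_potential (hn : 0 < n) (c : Fin n → Fin n → ℝ) (hd : ∀ i, c i i = 0)
    (hperm : ∀ σ : Equiv.Perm (Fin n), 0 ≤ ∑ i, c i (σ i)) :
    ∃ v : Fin n → ℝ, ∀ i j, v j - v i ≤ c i j := by
  haveI hne : Nonempty (Fin n) := ⟨⟨0, hn⟩⟩
  set s : Fin n := ⟨0, hn⟩ with hs
  -- encoded walks
  set wk : Fin n → (Fin n × (Fin n → Fin n)) → List (Fin n) :=
    fun j p => s :: ((List.ofFn p.2).take p.1 ++ [j]) with hwk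
  set d : Fin n → ℝ := fun j =>
    Finset.univ.inf' Finset.univ_nonempty (fun p => cost c (wk j p)) with hdd
  -- every list r of length ≤ n is of the form take
  have htake : ∀ r : List (Fin n), r.length ≤ n →
      (List.ofFn (fun k : Fin n => r.getD (k : ℕ) s)).take r.length = r := by
    intro r hr
    apply List.ext_getElem
    · simp [Nat.min_eq_left hr]
    · intro k h1 h2
      simp only [List.getElem_take, List.getElem_ofFn]
      exact (List.getD_eq_getElem r s h2).symm ▸ rfl
  -- the key lemma: d j is a lower bound for the cost of every walk from s to j
  have hdle : ∀ (j : Fin n) (p : Fin n × (Fin n → Fin n)), d j ≤ cost c (wk j p) :=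
    fun j p => Finset.inf'_le _ (Finset.mem_univ p)
  have keyL : ∀ (N : ℕ) (l : List (Fin n)) (j : Fin n), l.length ≤ N →
      (∃ t, l = s :: t) → (∃ u, l = u ++ [j]) → d j ≤ cost c l := by
    intro N
    induction N with
    | zero =>
        rintro l j hl ⟨t, rfl⟩ hu
        simp at hl
    | succ N ih =>
        rintro l j hl ⟨t, rfl⟩ ⟨u, hu⟩
        by_cases hnd : (s :: t).Nodup
        · -- encode the walk
          rcases eq_or_ne t [] with rfl | htne
          · -- l = [s], j = s
            have hjs : j = s := by
              cases u with
              | nil => exact (by simpa using congrArg List.getLast? hu : s = j).symm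
              | cons a u' =>
                  have := congrArg List.length hu
                  simp at this
            subst hjs
            have h := hdle s ((⟨0, hn⟩ : Fin n), fun _ => s)
            have h2 : cost c (wk s ((⟨0, hn⟩ : Fin n), fun _ => s)) = 0 := by
              simp [hwk, hd]
            rw [h2] at h
            simpa using h
          · obtain ⟨t', a, rfl⟩ : ∃ t' a, t = t' ++ [a] := by
              rcases t.eq_nil_or_concat with rfl | ⟨t', a, rfl⟩
              · exact absurd rfl htne
              · exact ⟨t', a, by simp⟩
            have haj : a = j := by
              have hu' : (s :: t') ++ [a] = u ++ [j] := by simpa using hu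
              exact concat_last_eq hu'
            subst haj
            have hcard : t'.length + 2 ≤ n := by
              have := List.Nodup.length_le_card hnd
              simp at this; omega
            have h := hdle a ((⟨t'.length, by omega⟩ : Fin n),
              fun k : Fin n => t'.getD (k : ℕ) s)
            have h2 : wk a ((⟨t'.length, by omega⟩ : Fin n),
                fun k : Fin n => t'.getD (k : ℕ) s) = s :: (t' ++ [a]) := by
              simp only [hwk]
              rw [htake t' (by omega)]
            rw [h2] at h
            exact h
        · -- remove a cycle
          obtain ⟨y, hy⟩ := List.exists_duplicate_iff_not_nodup.mpr hnd
          obtain ⟨l1, l2, l3, hdec⟩ := dup_decomp hy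
          have key : cost c (s :: t) =
              cost c (l1 ++ y :: l3) + cost c ((y :: l2) ++ [y]) := by
            rw [hdec]
            rw [cost_append c l1 y (l2 ++ y :: l3)]
            have e2 : y :: (l2 ++ y :: l3) = (y :: l2) ++ y :: l3 := by simp
            rw [e2, cost_append c (y :: l2) y l3, cost_append c l1 y l3]
            ring
          have hcyc : 0 ≤ cost c ((y :: l2) ++ [y]) :=
            cycle_nonneg c hd hperm l2.length l2 y le_rfl
          have hlen : t.length + 1 = l1.length + l2.length + l3.length + 2 := by
            have := congrArg List.length hdec
            simp [List.length_append, List.length_cons] at this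
            omega
          have hhead : ∃ t2, l1 ++ y :: l3 = s :: t2 := by
            cases l1 with
            | nil =>
                have hys : y = s := by
                  have := hdec
                  simp only [List.nil_append] at this
                  exact (((List.cons.injEq _ _ _ _).mp this).1).symm
                exact ⟨l3, by simp [hys]⟩
            | cons b l1'' =>
                have hbs : b = s := by
                  have := hdec
                  simp only [List.cons_append] at this
                  exact (((List.cons.injEq _ _ _ _).mp this).1).symm
                exact ⟨l1'' ++ y :: l3, by simp [hbs]⟩
          have hlast : ∃ u2, l1 ++ y :: l3 = u2 ++ [j] := by
            rcases l3.eq_nil_or_concat with h3 | ⟨l3', b, hl3⟩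
            · subst h3
              have hyj : y = j := by
                refine concat_last_eq (A := l1 ++ y :: l2) (u := u) ?_
                rw [← hu, hdec]; simp
              exact ⟨l1, by simp [hyj]⟩
            · obtain rfl : l3 = l3' ++ [b] := by simpa using hl3
              have hbj : b = j := by
                refine concat_last_eq (A := l1 ++ y :: (l2 ++ y :: l3')) (u := u) ?_
                rw [← hu, hdec]; simp
              refine ⟨l1 ++ y :: l3', by simp [hbj]⟩
          have hshort : (l1 ++ y :: l3).length ≤ N := by
            simp only [List.length_append, List.length_cons]
            have hlN : (s :: t).length ≤ N + 1 := hl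
            simp only [List.length_cons] at hlN
            omega
          have hih : d j ≤ cost c (l1 ++ y :: l3) := ih (l1 ++ y :: l3) j hshort hhead hlast
          linarith
  -- triangle inequality
  have tri : ∀ i j, d j ≤ d i + c i j := by
    intro i j
    obtain ⟨p, _, hpe⟩ := Finset.exists_mem_eq_inf' (Finset.univ_nonempty)
      (fun p => cost c (wk i p))
    have hpe' : d i = cost c (wk i p) := hpe
    have hwalk : d j ≤ cost c (wk i p ++ [j]) := by
      refine keyL ((wk i p).length + 1) (wk i p ++ [j]) j (by simp) ?_ ⟨wk i p, rfl⟩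
      exact ⟨((List.ofFn p.2).take (p.1 : ℕ) ++ [i]) ++ [j], by simp [hwk]⟩
    have hsplit : cost c (wk i p ++ [j]) = cost c (wk i p) + c i j := by
      have e : wk i p ++ [j] = (s :: (List.ofFn p.2).take (p.1 : ℕ)) ++ i :: [j] := by
        simp [hwk]
      have e2 : wk i p = (s :: (List.ofFn p.2).take (p.1 : ℕ)) ++ [i] := by
        simp [hwk]
      rw [e, cost_append c (s :: (List.ofFn p.2).take (p.1 : ℕ)) i [j], ← e2]
      simp
    linarith [hwalk, hsplit]
  exact ⟨d, fun i j => by linarith [tri i j]⟩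

end Stmt14

/-- A = 0 iff Afriat inequalities hold with nonnegative weights, not all zero. -/
theorem stmt_14 {n : ℕ} (hn : 0 < n) (R : Fin n → Fin n → ℝ) (hdiag : ∀ i, R i i = 0) :
    sSup {x : ℝ | ∃ w : Fin n → ℝ, (∀ i, 0 ≤ w i) ∧ (∑ i, w i = 1) ∧
        x = Finset.univ.inf' (Finset.univ_nonempty_iff.mpr ⟨Equiv.refl (Fin n)⟩)
              (fun σ : Equiv.Perm (Fin n) => ∑ i, w i * R i (σ i))} = 0
      ↔ ∃ (v w : Fin n → ℝ), (∀ i, 0 ≤ w i) ∧ (∃ i, w i ≠ 0) ∧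
          ∀ i j, v j - v i ≤ w i * R i j := by
  classical
  haveI : Nonempty (Fin n) := ⟨⟨0, hn⟩⟩
  have hne : (Finset.univ : Finset (Equiv.Perm (Fin n))).Nonempty :=
    Finset.univ_nonempty_iff.mpr ⟨Equiv.refl (Fin n)⟩
  set f : (Fin n → ℝ) → ℝ := fun w =>
    Finset.univ.inf' hne (fun σ : Equiv.Perm (Fin n) => ∑ i, w i * R i (σ i)) with hf
  set S : Set ℝ := {x : ℝ | ∃ w : Fin n → ℝ, (∀ i, 0 ≤ w i) ∧ (∑ i, w i = 1) ∧ x = f w}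
    with hSdef
  show sSup S = 0 ↔ _
  have hubS : ∀ x ∈ S, x ≤ 0 := by
    rintro x ⟨w, hw0, hw1, rfl⟩
    have h := Finset.inf'_le (fun σ : Equiv.Perm (Fin n) => ∑ i, w i * R i (σ i))
      (Finset.mem_univ (Equiv.refl (Fin n)))
    exact h.trans (le_of_eq (by simp [hdiag]))
  constructor
  · intro hsup
    have hfc : Continuous f := by
      refine Continuous.finset_inf'_apply hne fun σ _ => ?_
      exact continuous_finset_sum _ fun i _ => (continuous_apply i).mul continuous_const
    have hSim : S = f '' stdSimplex ℝ (Fin n) := by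
      ext x
      constructor
      · rintro ⟨w, hw0, hw1, rfl⟩; exact ⟨w, ⟨hw0, hw1⟩, rfl⟩
      · rintro ⟨w, ⟨hw0, hw1⟩, rfl⟩; exact ⟨w, hw0, hw1, rfl⟩
    have hScomp : IsCompact S := hSim ▸ (isCompact_stdSimplex _ _).image hfc
    have hSne : S.Nonempty := by
      refine ⟨f (fun _ => (n : ℝ)⁻¹), ⟨fun _ => (n : ℝ)⁻¹, fun i => by positivity, ?_, rfl⟩⟩
      rw [Finset.sum_const]
      simp only [Finset.card_univ, Fintype.card_fin, nsmul_eq_mul]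
      field_simp
    have h0S : (0 : ℝ) ∈ S := hsup ▸ hScomp.sSup_mem hSne
    obtain ⟨w, hw0, hw1, hw⟩ := h0S
    have hper : ∀ σ : Equiv.Perm (Fin n), 0 ≤ ∑ i, w i * R i (σ i) := by
      intro σ
      calc (0:ℝ) = f w := hw
        _ ≤ ∑ i, w i * R i (σ i) :=
          Finset.inf'_le (fun σ : Equiv.Perm (Fin n) => ∑ i, w i * R i (σ i))
            (Finset.mem_univ σ)
    obtain ⟨v, hv⟩ := Stmt14.exists_potential hn (fun i j => w i * R i j)
      (fun i => by simp [hdiag]) hper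
    refine ⟨v, w, hw0, ?_, hv⟩
    by_contra hall
    push_neg at hall
    have : (1:ℝ) = 0 := by
      rw [← hw1]; exact Finset.sum_eq_zero fun i _ => hall i
    linarith
  · rintro ⟨v, w, hw0, ⟨i0, hi0⟩, hineq⟩
    set W := ∑ i, w i with hW
    have hWpos : 0 < W :=
      lt_of_lt_of_le (lt_of_le_of_ne (hw0 i0) (Ne.symm hi0))
        (Finset.single_le_sum (fun i _ => hw0 i) (Finset.mem_univ i0))
    set w' : Fin n → ℝ := fun i => w i / W with hw'
    have hmem : (0:ℝ) ∈ S := by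
      refine ⟨w', fun i => div_nonneg (hw0 i) hWpos.le, ?_, ?_⟩
      · rw [hw', ← Finset.sum_div, ← hW]
        exact div_self hWpos.ne'
      · have hge : ∀ σ : Equiv.Perm (Fin n), 0 ≤ ∑ i, w' i * R i (σ i) := by
          intro σ
          have htel : ∑ i, (v (σ i) - v i) = 0 := by
            rw [Finset.sum_sub_distrib, Equiv.sum_comp σ v, sub_self]
          have hle : (0:ℝ) ≤ ∑ i, w i * R i (σ i) := by
            have h1 : ∑ i, (v (σ i) - v i) ≤ ∑ i, w i * R i (σ i) :=
              Finset.sum_le_sum fun i _ => hineq i (σ i)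
            linarith
          have heq : ∑ i, w' i * R i (σ i) = (∑ i, w i * R i (σ i)) / W := by
            rw [Finset.sum_div]
            exact Finset.sum_congr rfl fun i _ => by rw [hw']; ring
          rw [heq]
          exact div_nonneg hle hWpos.le
        refine (le_antisymm ?_ (Finset.le_inf' hne _ fun σ _ => hge σ)).symm
        have h := Finset.inf'_le (fun σ : Equiv.Perm (Fin n) => ∑ i, w' i * R i (σ i))
          (Finset.mem_univ (Equiv.refl (Fin n)))
        exact h.trans (le_of_eq (by simp [hdiag]))
    exact le_antisymm (csSup_le ⟨0, hmem⟩ hubS) (le_csSup ⟨0, hubS⟩ hmem)
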